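/- Let l be a symmetric norm on R^n with l(e_i) = 1, and let xi^(n) = (1/sqrt(n))(1,1,...,1). Then there are absolute constants lambda_1, lambda_2 > 0 (independent of n and l) such that lambda_1 * M_l / sqrt(log n) <= l(xi^(n)) <= lambda_2 * M_l, where M_l is the median of l on the Euclidean unit sphere S^{n-1}, provided mmc(l) <= gamma*sqrt(n) for a sufficiently small universal constant gamma. -/

import Mathlib

open MeasureTheory Metric
open scoped ENNReal Pointwise

/-- The uniform (Haar) probability measure on the unit Euclidean sphere in `ℝ^n`. -/
noncomputable def uniformSphere (n : ℕ) :
    Measure (sphere (0 : EuclideanSpace ℝ (Fin n)) 1) :=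
  ((volume : Measure (EuclideanSpace ℝ (Fin n))).toSphere Set.univ)⁻¹ •
    (volume : Measure (EuclideanSpace ℝ (Fin n))).toSphere

/-- The restriction of a norm on `ℝ^n` to vectors supported on the first `k`
coordinates, viewed as a function on `ℝ^k`. -/
noncomputable def restrictNorm {n : ℕ} (l : EuclideanSpace ℝ (Fin n) → ℝ) (k : ℕ) :
    EuclideanSpace ℝ (Fin k) → ℝ :=
  fun y => l (WithLp.toLp 2 (fun i : Fin n => if h : (i : ℕ) < k then y ⟨i, h⟩ else 0))

/-! ### Auxiliary lemmas about abstract symmetric norms -/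

section NormLemmas
variable {n : ℕ} {l : EuclideanSpace ℝ (Fin n) → ℝ}
  (htri : ∀ x y, l (x + y) ≤ l x + l y)
  (hhom : ∀ (c : ℝ) x, l (c • x) = |c| * l x)
  (habs : ∀ x : EuclideanSpace ℝ (Fin n), l (WithLp.toLp 2 (fun i => |x i|)) = l x)
  (hperm : ∀ (σ : Equiv.Perm (Fin n)) (x : EuclideanSpace ℝ (Fin n)),
    l (WithLp.toLp 2 (fun i => x (σ i))) = l x)

include hhom in
lemma l_zero : l 0 = 0 := by
  have := hhom 0 0
  simpa using this

include htri hhom in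
lemma l_nonneg (x : EuclideanSpace ℝ (Fin n)) : 0 ≤ l x := by
  have h1 : l ((-1 : ℝ) • x) = l x := by rw [hhom]; simp
  have h2 := htri x ((-1 : ℝ) • x)
  have h3 : x + (-1 : ℝ) • x = 0 := by
    ext i; simp
  rw [h3, l_zero hhom, h1] at h2
  linarith

include htri hhom habs in
lemma l_update_le (v : EuclideanSpace ℝ (Fin n)) (j : Fin n) (a b : ℝ) (hab : |a| ≤ |b|) :
    l (WithLp.toLp 2 (Function.update v j a)) ≤ l (WithLp.toLp 2 (Function.update v j b)) := by
  classical
  set w : EuclideanSpace ℝ (Fin n) := WithLp.toLp 2 (fun i => |v i|) with hw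
  have habs_upd : ∀ c : ℝ, l (WithLp.toLp 2 (Function.update v j c))
      = l (WithLp.toLp 2 (Function.update w j |c|)) := by
    intro c
    rw [← habs (WithLp.toLp 2 (Function.update v j c))]
    congr 1
    ext i
    by_cases h : i = j
    · subst h; simp
    · simp [Function.update_of_ne h, hw]
  rw [habs_upd a, habs_upd b]
  rcases eq_or_lt_of_le (abs_nonneg b) with hb | hb
  · have hzb : |b| = 0 := hb.symm
    have hza : |a| = 0 := le_antisymm (hzb ▸ hab) (abs_nonneg a)
    rw [hza, hzb]
  · set α := |a|; set β := |b|
    set c1 := (β + α) / (2 * β) with hc1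
    set c2 := (β - α) / (2 * β) with hc2
    have hβ : 0 < β := hb
    have hc1n : 0 ≤ c1 := by positivity
    have hc2n : 0 ≤ c2 := by
      apply div_nonneg _ (by positivity)
      simp only [sub_nonneg]; exact hab
    have hβ0 : (β:ℝ) ≠ 0 := ne_of_gt hβ
    have hc12 : c1 + c2 = 1 := by rw [hc1, hc2]; field_simp; ring
    have hkey : WithLp.toLp 2 (Function.update w j α)
        = c1 • WithLp.toLp 2 (Function.update w j β) + c2 • WithLp.toLp 2 (Function.update w j (-β)) := by
      ext i
      show _ = c1 * Function.update w j β i + c2 * Function.update w j (-β) i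
      by_cases h : i = j
      · subst h
        simp only [Function.update_self]
        rw [hc1, hc2]
        field_simp
        ring
      · simp only [Function.update_of_ne h]
        have : c1 * w i + c2 * w i = (c1 + c2) * w i := by ring
        rw [this, hc12, one_mul]
    have hneg : l (WithLp.toLp 2 (Function.update w j (-β)))
        = l (WithLp.toLp 2 (Function.update w j β)) := by
      rw [← habs (WithLp.toLp 2 (Function.update w j (-β)))]
      congr 1
      ext i
      by_cases h : i = j
      · subst h; simp [abs_of_pos hβ]
      · simp [Function.update_of_ne h, hw, abs_abs]
    calc l (WithLp.toLp 2 (Function.update w j α))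
        ≤ l (c1 • WithLp.toLp 2 (Function.update w j β))
          + l (c2 • WithLp.toLp 2 (Function.update w j (-β))) := by
          rw [hkey]; exact htri _ _
      _ = c1 * l (WithLp.toLp 2 (Function.update w j β))
          + c2 * l (WithLp.toLp 2 (Function.update w j (-β))) := by
          rw [hhom, hhom, abs_of_nonneg hc1n, abs_of_nonneg hc2n]
      _ = (c1 + c2) * l (WithLp.toLp 2 (Function.update w j β)) := by rw [hneg]; ring
      _ = l (WithLp.toLp 2 (Function.update w j β)) := by rw [hc12, one_mul]

include htri hhom habs in
lemma l_mono (x y : EuclideanSpace ℝ (Fin n)) (h : ∀ i, |y i| ≤ |x i|) : l y ≤ l x := by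
  classical
  set g : ℕ → EuclideanSpace ℝ (Fin n) :=
    fun k => WithLp.toLp 2 (fun i : Fin n => if (i : ℕ) < k then y i else x i) with hg
  have hstep : ∀ k, l (g (k + 1)) ≤ l (g k) := by
    intro k
    by_cases hk : k < n
    · set j : Fin n := ⟨k, hk⟩ with hj
      have e1 : g (k + 1) = WithLp.toLp 2 (Function.update (g k) j (y j)) := by
        ext i
        simp only [WithLp.ofLp_toLp]
        rw [Function.update_apply]
        by_cases hij : i = j
        · subst hij; simp [hg, hj]
        · have : (i : ℕ) ≠ k := fun hc => hij (Fin.ext hc)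
          simp only [hg, if_neg hij]
          by_cases hik : (i : ℕ) < k
          · rw [if_pos hik, if_pos (by omega)]
          · rw [if_neg hik, if_neg (by omega)]
      have e2 : g k = WithLp.toLp 2 (Function.update (g k) j (x j)) := by
        ext i
        simp only [WithLp.ofLp_toLp]
        rw [Function.update_apply]
        by_cases hij : i = j
        · subst hij; simp [hg, hj]
        · simp [if_neg hij]
      rw [e1]
      nth_rewrite 2 [e2]
      exact l_update_le htri hhom habs (g k) j (y j) (x j) (h j)
    · have : g (k + 1) = g k := by
        ext i
        have hi : (i : ℕ) < n := i.2
        simp only [hg]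
        rw [if_pos (by omega), if_pos (by omega)]
      rw [this]
  have hall : ∀ k, l (g k) ≤ l (g 0) := by
    intro k
    induction k with
    | zero => exact le_refl _
    | succ m ih => exact le_trans (hstep m) ih
  have hgn : g n = y := by
    ext i; simp [hg, i.2]
  have hg0 : g 0 = x := by
    ext i; simp [hg]
  calc l y = l (g n) := by rw [hgn]
    _ ≤ l (g 0) := hall n
    _ = l x := by rw [hg0]

include htri hhom in
lemma l_sum_le {α : Type*} (s : Finset α) (f : α → EuclideanSpace ℝ (Fin n)) :
    l (∑ a ∈ s, f a) ≤ ∑ a ∈ s, l (f a) := by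
  classical
  induction s using Finset.cons_induction with
  | empty =>
      have h0 : l 0 = 0 := by simpa using hhom 0 0
      simp [h0]
  | cons a s ha ih =>
      rw [Finset.sum_cons, Finset.sum_cons]
      exact le_trans (htri _ _) (by linarith)

include htri hhom habs hperm in
lemma l_shift (hn : 2 ≤ n) (x : EuclideanSpace ℝ (Fin n)) :
    l (WithLp.toLp 2 (fun _ => ∑ j, |x j|)) ≤ n * l x := by
  haveI : NeZero n := ⟨by omega⟩
  have hz : WithLp.toLp 2 (fun _ : Fin n => ∑ j, |x j|)
      = ∑ k : Fin n, (WithLp.toLp 2 (fun i => |x (k + i)|) : EuclideanSpace ℝ (Fin n)) := by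
    ext i
    rw [WithLp.ofLp_sum, Finset.sum_apply]
    exact (Equiv.sum_comp (Equiv.addRight i) (fun j => |x j|)).symm
  have hval : ∀ k : Fin n, l (WithLp.toLp 2 (fun i => |x (k + i)|)) = l x := by
    intro k
    have h1 : l (WithLp.toLp 2 (fun i => |x (k + i)|)) = l (WithLp.toLp 2 (fun i => x (k + i))) :=
      habs (WithLp.toLp 2 (fun i => x (k + i)))
    have h2 : l (WithLp.toLp 2 (fun i => x ((Equiv.addLeft k) i))) = l x := hperm (Equiv.addLeft k) x
    simpa using h1.trans h2
  calc l (WithLp.toLp 2 (fun _ => ∑ j, |x j|))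
      = l (∑ k : Fin n, (WithLp.toLp 2 (fun i => |x (k + i)|) : EuclideanSpace ℝ (Fin n))) := by
        rw [hz]
    _ ≤ ∑ k : Fin n, l (WithLp.toLp 2 (fun i => |x (k + i)|)) := l_sum_le htri hhom _ _
    _ = ∑ _k : Fin n, l x := by
        apply Finset.sum_congr rfl; intro k _; exact hval k
    _ = n * l x := by rw [Finset.sum_const, Finset.card_univ, Fintype.card_fin, nsmul_eq_mul]

include hhom in
lemma l_const (hn : 2 ≤ n) (c : ℝ) (hc : 0 ≤ c) :
    l (WithLp.toLp 2 (fun _ => c)) = c * Real.sqrt n * l (WithLp.toLp 2 (fun _ => 1 / Real.sqrt n)) := by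
  have hsn : (0:ℝ) < Real.sqrt n := Real.sqrt_pos.mpr (by positivity)
  have he : WithLp.toLp 2 (fun _ : Fin n => c)
      = (c * Real.sqrt n) • (WithLp.toLp 2 (fun _ => 1 / Real.sqrt n) : EuclideanSpace ℝ (Fin n)) := by
    ext i
    show c = (c * Real.sqrt n) * (1 / Real.sqrt n)
    field_simp
  rw [he, hhom, abs_of_nonneg (by positivity)]

end NormLemmas

/-! ### Auxiliary lemmas about the uniform measure on the sphere -/

section MeasureLemmas
variable {n : ℕ}

lemma coord_le_norm (x : EuclideanSpace ℝ (Fin n)) (i : Fin n) : |x i| ≤ ‖x‖ := by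
  have h := abs_real_inner_le_norm x (EuclideanSpace.single i (1:ℝ))
  rw [EuclideanSpace.inner_single_right, EuclideanSpace.norm_single] at h
  simpa using h

lemma uniform_le (hn : 2 ≤ n) (A : Set (sphere (0 : EuclideanSpace ℝ (Fin n)) 1))
    (hA : MeasurableSet A) (B : ℝ≥0∞)
    (hC : volume (Set.Ioo (0:ℝ) 1 • ((↑) '' A) : Set (EuclideanSpace ℝ (Fin n)))
        ≤ B * volume (ball (0 : EuclideanSpace ℝ (Fin n)) 1)) :
    uniformSphere n A ≤ B := by
  haveI : Nonempty (Fin n) := ⟨⟨0, by omega⟩⟩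
  haveI : Nontrivial (EuclideanSpace ℝ (Fin n)) := inferInstance
  set V := volume (ball (0 : EuclideanSpace ℝ (Fin n)) 1) with hV
  have hV0 : V ≠ 0 := (measure_ball_pos _ _ one_pos).ne'
  have hVt : V ≠ ⊤ := measure_ball_lt_top.ne
  have hdim : Module.finrank ℝ (EuclideanSpace ℝ (Fin n)) = n := finrank_euclideanSpace_fin
  have huniv : (volume : Measure (EuclideanSpace ℝ (Fin n))).toSphere Set.univ = n * V := by
    rw [Measure.toSphere_apply_univ, hdim]
  have happ : (volume : Measure (EuclideanSpace ℝ (Fin n))).toSphere A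
      = n * volume (Set.Ioo (0:ℝ) 1 • ((↑) '' A) : Set (EuclideanSpace ℝ (Fin n))) := by
    rw [Measure.toSphere_apply' _ hA, hdim]
  have hc0 : ((n : ℝ≥0∞) * V) ≠ 0 := by
    simp only [ne_eq, mul_eq_zero, not_or]
    exact ⟨by simp; omega, hV0⟩
  have hct : ((n : ℝ≥0∞) * V) ≠ ⊤ :=
    ENNReal.mul_ne_top (ENNReal.natCast_ne_top n) hVt
  rw [uniformSphere, Measure.smul_apply, smul_eq_mul, huniv, happ]
  calc ((n : ℝ≥0∞) * V)⁻¹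
        * ((n : ℝ≥0∞) * volume (Set.Ioo (0:ℝ) 1 • ((↑) '' A) : Set (EuclideanSpace ℝ (Fin n))))
      ≤ ((n : ℝ≥0∞) * V)⁻¹ * ((n : ℝ≥0∞) * (B * V)) := by gcongr
    _ = B * (((n : ℝ≥0∞) * V)⁻¹ * ((n : ℝ≥0∞) * V)) := by ring
    _ = B := by rw [ENNReal.inv_mul_cancel hc0 hct, mul_one]

lemma cap_le (hn : 2 ≤ n) (t : ℝ) (ht0 : 0 < t) (ht1 : t ≤ 1)
    (v : EuclideanSpace ℝ (Fin n)) (hv : ‖v‖ = 1) :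
    uniformSphere n {x : sphere (0 : EuclideanSpace ℝ (Fin n)) 1 |
        t < inner (𝕜 := ℝ) (x : EuclideanSpace ℝ (Fin n)) v}
      ≤ ENNReal.ofReal (t ^ n) + ENNReal.ofReal (Real.sqrt (1 - t ^ 2) ^ n) := by
  haveI : Nonempty (Fin n) := ⟨⟨0, by omega⟩⟩
  haveI : Nontrivial (EuclideanSpace ℝ (Fin n)) := inferInstance
  set s := Real.sqrt (1 - t ^ 2) with hs
  have hs0 : 0 ≤ s := Real.sqrt_nonneg _
  apply uniform_le hn _ ?_ _ ?_
  · have hcont : Continuous fun x : sphere (0 : EuclideanSpace ℝ (Fin n)) 1 =>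
        inner (𝕜 := ℝ) (x : EuclideanSpace ℝ (Fin n)) v :=
      Continuous.inner continuous_subtype_val continuous_const
    exact (isOpen_lt continuous_const hcont).measurableSet
  · have hsub : (Set.Ioo (0:ℝ) 1 • ((↑) '' {x : sphere (0 : EuclideanSpace ℝ (Fin n)) 1 |
          t < inner (𝕜 := ℝ) (x : EuclideanSpace ℝ (Fin n)) v}) : Set (EuclideanSpace ℝ (Fin n)))
        ⊆ ball 0 t ∪ closedBall (t • v) s := by
      rintro y hy
      rw [Set.mem_smul] at hy
      obtain ⟨r, hr, z, hz, rfl⟩ := hy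
      obtain ⟨x, hx, rfl⟩ := hz
      have hxs : ‖(x : EuclideanSpace ℝ (Fin n))‖ = 1 := by
        have := x.2
        rwa [mem_sphere_zero_iff_norm] at this
      have hinner : t < inner (𝕜 := ℝ) (x : EuclideanSpace ℝ (Fin n)) v := hx
      rcases lt_or_ge r t with hrt | hrt
      · left
        rw [mem_ball, dist_zero_right, norm_smul, hxs, mul_one, Real.norm_eq_abs,
          abs_of_pos hr.1]
        exact hrt
      · right
        rw [mem_closedBall, dist_eq_norm]
        have hsq : ‖r • (x : EuclideanSpace ℝ (Fin n)) - t • v‖ ^ 2 ≤ 1 - t ^ 2 := by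
          rw [norm_sub_sq_real]
          rw [norm_smul, hxs, norm_smul, hv, mul_one, mul_one,
            Real.norm_eq_abs, Real.norm_eq_abs, abs_of_pos hr.1, abs_of_pos ht0]
          have hi : inner (𝕜 := ℝ) (r • (x : EuclideanSpace ℝ (Fin n))) (t • v)
              = r * t * inner (𝕜 := ℝ) (x : EuclideanSpace ℝ (Fin n)) v := by
            rw [real_inner_smul_left, real_inner_smul_right]; ring
          rw [hi]
          have h1 : r * t * t < r * t * inner (𝕜 := ℝ) (x : EuclideanSpace ℝ (Fin n)) v :=
            mul_lt_mul_of_pos_left hinner (mul_pos hr.1 ht0)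
          have hr1 : r ≤ 1 := le_of_lt hr.2
          nlinarith [mul_nonneg (sub_nonneg.mpr hr1) (sub_nonneg.mpr (by nlinarith : t^2 ≤ r))]
        have hnn : 0 ≤ ‖r • (x : EuclideanSpace ℝ (Fin n)) - t • v‖ := norm_nonneg _
        have : ‖r • (x : EuclideanSpace ℝ (Fin n)) - t • v‖ ^ 2 ≤ s ^ 2 := by
          rw [hs, Real.sq_sqrt (by nlinarith : (0:ℝ) ≤ 1 - t ^ 2)]
          exact hsq
        nlinarith [this, hs0, hnn]
    calc volume (Set.Ioo (0:ℝ) 1 • ((↑) '' {x : sphere (0 : EuclideanSpace ℝ (Fin n)) 1 |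
            t < inner (𝕜 := ℝ) (x : EuclideanSpace ℝ (Fin n)) v}) : Set (EuclideanSpace ℝ (Fin n)))
        ≤ volume (ball (0 : EuclideanSpace ℝ (Fin n)) t ∪ closedBall (t • v) s) :=
          measure_mono hsub
      _ ≤ volume (ball (0 : EuclideanSpace ℝ (Fin n)) t) + volume (closedBall (t • v) s) :=
          measure_union_le _ _
      _ = ENNReal.ofReal (t ^ n) * volume (ball (0 : EuclideanSpace ℝ (Fin n)) 1)
          + ENNReal.ofReal (s ^ n) * volume (ball (0 : EuclideanSpace ℝ (Fin n)) 1) := by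
          rw [Measure.addHaar_ball volume _ ht0.le, Measure.addHaar_closedBall volume _ hs0,
            finrank_euclideanSpace_fin]
      _ = (ENNReal.ofReal (t ^ n) + ENNReal.ofReal (s ^ n))
            * volume (ball (0 : EuclideanSpace ℝ (Fin n)) 1) := by ring

lemma l1_volume (hn : 2 ≤ n) (R : ℝ) :
    volume {y : EuclideanSpace ℝ (Fin n) | ∑ j, |y j| ≤ R}
      = ENNReal.ofReal R ^ n * ENNReal.ofReal (2 ^ n / (n.factorial : ℝ)) := by
  haveI : Nonempty (Fin n) := ⟨⟨0, by omega⟩⟩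
  have hmp := EuclideanSpace.volume_preserving_symm_measurableEquiv_toLp (Fin n)
  have hset : MeasurableSet {x : Fin n → ℝ | (∑ j, |x j| ^ (1:ℝ)) ^ (1/(1:ℝ)) ≤ R} := by
    apply measurableSet_le _ measurable_const
    fun_prop
  have h2 := hmp.measure_preimage hset.nullMeasurableSet
  have hformula := MeasureTheory.volume_sum_rpow_le (Fin n) (le_refl (1:ℝ)) R
  rw [hformula] at h2
  simp only [Real.rpow_one, one_div_one, Fintype.card_fin, div_one] at h2
  rw [show ((1:ℝ) + 1) = 2 by norm_num, Real.Gamma_two, Real.Gamma_nat_eq_factorial] at h2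
  rw [show ((2:ℝ) * 1) = 2 by norm_num] at h2
  exact h2

lemma cube_le_ball (hn : 2 ≤ n) :
    ENNReal.ofReal ((2 / Real.sqrt n) ^ n) ≤ volume (ball (0 : EuclideanSpace ℝ (Fin n)) 1) := by
  haveI : Nonempty (Fin n) := ⟨⟨0, by omega⟩⟩
  have hnR : (0:ℝ) < n := by positivity
  have hn0 : (0:ℝ) < Real.sqrt n := Real.sqrt_pos.mpr hnR
  set a : ℝ := 1 / Real.sqrt n with ha
  have ha0 : 0 < a := by positivity
  have hmp := EuclideanSpace.volume_preserving_symm_measurableEquiv_toLp (Fin n)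
  have hcube : volume ((⇑(MeasurableEquiv.toLp 2 (Fin n → ℝ)).symm) ⁻¹'
        (Set.univ.pi fun _ : Fin n => Set.Icc (-a) a))
      = ENNReal.ofReal ((2/Real.sqrt n) ^ n) := by
    rw [hmp.measure_preimage (MeasurableSet.univ_pi fun _ => measurableSet_Icc).nullMeasurableSet,
      volume_pi_pi]
    simp only [Real.volume_Icc, sub_neg_eq_add]
    rw [Finset.prod_const, Finset.card_univ, Fintype.card_fin,
      ← ENNReal.ofReal_pow (by positivity)]
    congr 2
    rw [ha]; ring
  rw [← hcube,
    show volume (ball (0 : EuclideanSpace ℝ (Fin n)) 1)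
        = volume (closedBall (0 : EuclideanSpace ℝ (Fin n)) 1) from
      (Measure.addHaar_closedBall_eq_addHaar_ball _ _ _).symm]
  apply measure_mono
  intro x hx
  simp only [Set.mem_preimage, Set.mem_pi, Set.mem_univ, Set.mem_Icc, forall_true_left] at hx
  rw [mem_closedBall, dist_zero_right, EuclideanSpace.norm_eq]
  have hsum : ∑ i, ‖x i‖ ^ 2 ≤ 1 := by
    have h1 : ∀ i : Fin n, ‖x i‖ ^ 2 ≤ a ^ 2 := by
      intro i
      have := hx i
      have habs : |x i| ≤ a := abs_le.mpr ⟨this.1, this.2⟩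
      calc ‖x i‖ ^ 2 = |x i| ^ 2 := by rw [Real.norm_eq_abs]
        _ ≤ a ^ 2 := by
          apply sq_le_sq' <;> [linarith [abs_nonneg (x i), neg_abs_le (x i)]; exact habs]
    calc ∑ i, ‖x i‖ ^ 2 ≤ ∑ _i : Fin n, a ^ 2 := Finset.sum_le_sum fun i _ => h1 i
      _ = n * a ^ 2 := by rw [Finset.sum_const, Finset.card_univ, Fintype.card_fin, nsmul_eq_mul]
      _ = 1 := by
        rw [ha, div_pow, one_pow, Real.sq_sqrt hnR.le]
        field_simp
  calc Real.sqrt (∑ i, ‖x i‖ ^ 2) ≤ Real.sqrt 1 := Real.sqrt_le_sqrt hsum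
    _ = 1 := Real.sqrt_one

end MeasureLemmas

/-! ### Numeric lemmas -/

lemma pow_le_exp_factorial : ∀ m : ℕ, (m : ℝ) ^ m ≤ Real.exp 1 ^ m * m.factorial := by
  intro m
  induction m with
  | zero => simp
  | succ k ih =>
      rcases Nat.eq_zero_or_pos k with hk | hk
      · subst hk
        have h := Real.add_one_le_exp (1:ℝ)
        push_cast
        simp only [pow_one, Nat.factorial_one, Nat.cast_one, mul_one]
        linarith
      · have hkR : (0:ℝ) < k := by positivity
        have h1 : ((k:ℝ) + 1) ^ k ≤ Real.exp 1 * (k:ℝ) ^ k := by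
          have h2 : ((k:ℝ) + 1) = (k:ℝ) * (1 + 1 / k) := by field_simp
          rw [h2, mul_pow]
          have h3 : (1 + 1 / (k:ℝ)) ^ k ≤ Real.exp 1 := by
            have h4 : (1 + 1 / (k:ℝ)) ≤ Real.exp (1 / k) := by
              have := Real.add_one_le_exp (1 / (k:ℝ))
              linarith
            calc (1 + 1 / (k:ℝ)) ^ k ≤ Real.exp (1 / k) ^ k := by
                  apply pow_le_pow_left₀ (by positivity) h4
              _ = Real.exp ((k:ℝ) * (1 / k)) := by rw [← Real.exp_nat_mul]
              _ = Real.exp 1 := by rw [mul_one_div, div_self (ne_of_gt hkR)]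
          calc (k:ℝ) ^ k * (1 + 1 / (k:ℝ)) ^ k ≤ (k:ℝ) ^ k * Real.exp 1 := by
                apply mul_le_mul_of_nonneg_left h3 (by positivity)
            _ = Real.exp 1 * (k:ℝ) ^ k := by ring
        have hexp : (0:ℝ) < Real.exp 1 := Real.exp_pos 1
        push_cast
        calc ((k:ℝ) + 1) ^ (k + 1) = ((k:ℝ) + 1) * ((k:ℝ) + 1) ^ k := by ring
          _ ≤ ((k:ℝ) + 1) * (Real.exp 1 * (k:ℝ) ^ k) := by
              apply mul_le_mul_of_nonneg_left h1 (by positivity)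
          _ ≤ ((k:ℝ) + 1) * (Real.exp 1 * (Real.exp 1 ^ k * k.factorial)) := by
              apply mul_le_mul_of_nonneg_left _ (by positivity)
              apply mul_le_mul_of_nonneg_left ih hexp.le
          _ = Real.exp 1 ^ (k + 1) * (((k:ℝ) + 1) * k.factorial) := by ring
          _ = Real.exp 1 ^ (k + 1) * ((k + 1).factorial : ℝ) := by
              rw [Nat.factorial_succ]; push_cast; ring

lemma sixteen_le_two_pow : ∀ m : ℕ, 8 ≤ m → 16 * m ≤ 2 ^ m := by
  intro m hm
  induction m, hm using Nat.le_induction with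
  | base => norm_num
  | succ k hk ih =>
      have h2 : 16 ≤ 2 ^ k := by
        calc (16:ℕ) ≤ 16 * k := by omega
          _ ≤ 2 ^ k := ih
      calc 16 * (k + 1) = 16 * k + 16 := by ring
        _ ≤ 2 ^ k + 2 ^ k := by omega
        _ = 2 ^ (k + 1) := by ring

lemma l1_numeric (n : ℕ) (hn : 2 ≤ n) :
    (Real.sqrt n / 6) ^ n * (2 ^ n / (n.factorial : ℝ)) ≤ (1/4) * (2 / Real.sqrt n) ^ n := by
  have hnR : (0:ℝ) < n := by positivity
  set A := Real.sqrt n with hA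
  have hA0 : 0 < A := Real.sqrt_pos.mpr hnR
  have hAA : A * A = n := Real.mul_self_sqrt hnR.le
  have hfac : (0:ℝ) < (n.factorial : ℝ) := by exact_mod_cast n.factorial_pos
  have he3 : Real.exp 1 ≤ 3 := by
    have := Real.exp_one_lt_d9
    linarith
  have hkey' : 4 * (n:ℝ) ^ n ≤ 2 ^ n * 3 ^ n * (n.factorial : ℝ) := by
    have h2 : ((n:ℝ)) ^ n ≤ Real.exp 1 ^ n * n.factorial := pow_le_exp_factorial n
    have h5 : Real.exp 1 ^ n ≤ 3 ^ n := pow_le_pow_left₀ (Real.exp_pos 1).le he3 n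
    have h7 : (4:ℝ) ≤ 2 ^ n := by
      calc (4:ℝ) = 2 ^ 2 := by norm_num
        _ ≤ 2 ^ n := pow_le_pow_right₀ (by norm_num) hn
    have h8 : 4 * Real.exp 1 ^ n ≤ 2 ^ n * 3 ^ n :=
      mul_le_mul h7 h5 (by positivity) (by positivity)
    calc 4 * (n:ℝ) ^ n ≤ 4 * (Real.exp 1 ^ n * n.factorial) := by
          apply mul_le_mul_of_nonneg_left h2 (by norm_num)
      _ = (4 * Real.exp 1 ^ n) * n.factorial := by ring
      _ ≤ (2 ^ n * 3 ^ n) * n.factorial := mul_le_mul_of_nonneg_right h8 hfac.le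
  have hrw : (1/4 : ℝ) * (2/A) ^ n = 2 ^ n / (4 * A ^ n) := by
    rw [div_pow]; ring
  rw [div_pow, hrw, div_mul_div_comm, div_le_div_iff₀ (by positivity) (by positivity)]
  have hAn : A ^ n * A ^ n = (n:ℝ) ^ n := by rw [← mul_pow, hAA]
  have h6n : (6:ℝ) ^ n = 2 ^ n * 3 ^ n := by rw [← mul_pow]; norm_num
  have hmul := mul_le_mul_of_nonneg_left hkey' (by positivity : (0:ℝ) ≤ 2 ^ n)
  calc A ^ n * 2 ^ n * (4 * A ^ n) = 2 ^ n * (4 * ((n:ℝ) ^ n)) := by rw [← hAn]; ring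
    _ ≤ 2 ^ n * (2 ^ n * 3 ^ n * (n.factorial : ℝ)) := hmul
    _ = 2 ^ n * (6 ^ n * (n.factorial : ℝ)) := by rw [h6n]

lemma l1_bad {n : ℕ} (hn : 2 ≤ n) :
    uniformSphere n {x : sphere (0 : EuclideanSpace ℝ (Fin n)) 1 |
        ∑ j, |(x : EuclideanSpace ℝ (Fin n)) j| ≤ Real.sqrt n / 6}
      ≤ ENNReal.ofReal (1/4) := by
  have hnR : (0:ℝ) < n := by positivity
  have hsn : (0:ℝ) < Real.sqrt n := Real.sqrt_pos.mpr hnR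
  apply uniform_le hn _ ?_ _ ?_
  · have hcont : Continuous fun x : sphere (0 : EuclideanSpace ℝ (Fin n)) 1 =>
        ∑ j, |(x : EuclideanSpace ℝ (Fin n)) j| := by
      refine continuous_finset_sum _ fun j _ => ?_
      exact ((EuclideanSpace.proj j).continuous.comp continuous_subtype_val).abs
    exact (isClosed_le hcont continuous_const).measurableSet
  · have hsub : (Set.Ioo (0:ℝ) 1 • ((↑) '' {x : sphere (0 : EuclideanSpace ℝ (Fin n)) 1 |
          ∑ j, |(x : EuclideanSpace ℝ (Fin n)) j| ≤ Real.sqrt n / 6})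
            : Set (EuclideanSpace ℝ (Fin n)))
        ⊆ {y : EuclideanSpace ℝ (Fin n) | ∑ j, |y j| ≤ Real.sqrt n / 6} := by
      rintro y hy
      rw [Set.mem_smul] at hy
      obtain ⟨r, hr, z, hz, rfl⟩ := hy
      obtain ⟨x, hx, rfl⟩ := hz
      have hxl : ∑ j, |(x : EuclideanSpace ℝ (Fin n)) j| ≤ Real.sqrt n / 6 := hx
      have hcoord : ∀ j, (r • (x : EuclideanSpace ℝ (Fin n))) j
          = r * (x : EuclideanSpace ℝ (Fin n)) j := fun j => rfl
      simp only [Set.mem_setOf_eq, hcoord]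
      calc ∑ j, |r * (x : EuclideanSpace ℝ (Fin n)) j|
          = |r| * ∑ j, |(x : EuclideanSpace ℝ (Fin n)) j| := by
            rw [Finset.mul_sum]
            exact Finset.sum_congr rfl fun j _ => abs_mul r _
        _ ≤ 1 * (Real.sqrt n / 6) := by
            apply mul_le_mul _ hxl (Finset.sum_nonneg fun j _ => abs_nonneg _) zero_le_one
            rw [abs_of_pos hr.1]; exact hr.2.le
        _ = Real.sqrt n / 6 := one_mul _
    calc volume (Set.Ioo (0:ℝ) 1 • ((↑) '' {x : sphere (0 : EuclideanSpace ℝ (Fin n)) 1 |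
            ∑ j, |(x : EuclideanSpace ℝ (Fin n)) j| ≤ Real.sqrt n / 6})
            : Set (EuclideanSpace ℝ (Fin n)))
        ≤ volume {y : EuclideanSpace ℝ (Fin n) | ∑ j, |y j| ≤ Real.sqrt n / 6} :=
          measure_mono hsub
      _ = ENNReal.ofReal (Real.sqrt n / 6) ^ n * ENNReal.ofReal (2 ^ n / (n.factorial : ℝ)) :=
          l1_volume hn _
      _ = ENNReal.ofReal ((Real.sqrt n / 6) ^ n * (2 ^ n / (n.factorial : ℝ))) := by
          rw [← ENNReal.ofReal_pow (by positivity), ← ENNReal.ofReal_mul (by positivity)]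
      _ ≤ ENNReal.ofReal ((1/4) * (2 / Real.sqrt n) ^ n) :=
          ENNReal.ofReal_le_ofReal (l1_numeric n hn)
      _ = ENNReal.ofReal (1/4) * ENNReal.ofReal ((2 / Real.sqrt n) ^ n) := by
          rw [← ENNReal.ofReal_mul (by norm_num)]
      _ ≤ ENNReal.ofReal (1/4) * volume (ball (0 : EuclideanSpace ℝ (Fin n)) 1) := by
          gcongr
          exact cube_le_ball hn

lemma ofReal_quarter_lt_half : ENNReal.ofReal (1/4) < 1/2 := by
  rw [show (1/2 : ℝ≥0∞) = ENNReal.ofReal (1/2) by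
    rw [ENNReal.ofReal_div_of_pos (by norm_num)]
    norm_num]
  rw [ENNReal.ofReal_lt_ofReal_iff (by norm_num)]
  norm_num

set_option maxHeartbeats 1000000 in
/-- Flat median lemma: there are absolute constants `λ₁, λ₂, γ > 0` such that
for every normalized symmetric norm `l` on `ℝ^n` with `mmc(l) ≤ γ √n`
(expressed via the restrictions `l^{(k)}`), the normalized all-ones vector
`ξ = (1/√n)(1,…,1)` satisfies `λ₁ M / √(log n) ≤ l ξ ≤ λ₂ M`, where `M` is the
median of `l` on the unit sphere. -/
theorem flat_median_lemma :
    ∃ lam₁ lam₂ γ : ℝ, 0 < lam₁ ∧ 0 < lam₂ ∧ 0 < γ ∧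
      ∀ n : ℕ, 2 ≤ n → ∀ l : EuclideanSpace ℝ (Fin n) → ℝ,
      (∀ x y, l (x + y) ≤ l x + l y) →
      (∀ (c : ℝ) x, l (c • x) = |c| * l x) →
      (∀ x, l x = 0 ↔ x = 0) →
      (∀ (σ : Equiv.Perm (Fin n)) (x : EuclideanSpace ℝ (Fin n)),
        l (WithLp.toLp 2 (fun i => x (σ i))) = l x) →
      (∀ x : EuclideanSpace ℝ (Fin n), l (WithLp.toLp 2 (fun i => |x i|)) = l x) →
      (∀ i : Fin n, l (EuclideanSpace.single i 1) = 1) →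
      ∀ M : ℝ,
      (1 / 2 : ℝ≥0∞) ≤ uniformSphere n {x | l ↑x ≤ M} →
      (1 / 2 : ℝ≥0∞) ≤ uniformSphere n {x | M ≤ l ↑x} →
      -- `mmc(l) ≤ γ √n`: for every `1 ≤ k ≤ n`, the maximum of `l^{(k)}` on
      -- `S^{k-1}` is at most `γ √n` times any median of `l^{(k)}` on `S^{k-1}`
      (∀ k : ℕ, 0 < k → k ≤ n → ∀ bk Mk : ℝ,
        IsGreatest (restrictNorm l k '' sphere (0 : EuclideanSpace ℝ (Fin k)) 1) bk →
        (1 / 2 : ℝ≥0∞) ≤ uniformSphere k {y | restrictNorm l k ↑y ≤ Mk} →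
        (1 / 2 : ℝ≥0∞) ≤ uniformSphere k {y | Mk ≤ restrictNorm l k ↑y} →
        bk ≤ γ * Real.sqrt n * Mk) →
      lam₁ * M / Real.sqrt (Real.log n) ≤ l (WithLp.toLp 2 (fun _ => 1 / Real.sqrt n)) ∧
        l (WithLp.toLp 2 (fun _ => 1 / Real.sqrt n)) ≤ lam₂ * M := by
  refine ⟨1/100, 6, 1, by norm_num, by norm_num, by norm_num, ?_⟩
  intro n hn l htri hhom _hdef hperm habs _hsingle M hM1 hM2 _hmmc
  haveI : Nonempty (Fin n) := ⟨⟨0, by omega⟩⟩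
  have hnR : (0:ℝ) < n := by positivity
  have hsn : (0:ℝ) < Real.sqrt n := Real.sqrt_pos.mpr hnR
  have hn1 : (1:ℝ) < n := by exact_mod_cast (by omega : 1 < n)
  have hlogn : (0:ℝ) < Real.log n := Real.log_pos hn1
  have hslog : 0 < Real.sqrt (Real.log n) := Real.sqrt_pos.mpr hlogn
  set ξ : EuclideanSpace ℝ (Fin n) := WithLp.toLp 2 (fun _ => 1 / Real.sqrt n) with hξ
  have hξnn : 0 ≤ l ξ := l_nonneg htri hhom ξ
  -- upper bound
  have hupper : l ξ ≤ 6 * M := by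
    have hbad := l1_bad (n := n) hn
    have hex : ∃ x : sphere (0 : EuclideanSpace ℝ (Fin n)) 1,
        l ↑x ≤ M ∧ Real.sqrt n / 6 < ∑ j, |(x : EuclideanSpace ℝ (Fin n)) j| := by
      by_contra hcon
      push_neg at hcon
      have hsubset : {x : sphere (0 : EuclideanSpace ℝ (Fin n)) 1 | l ↑x ≤ M}
          ⊆ {x : sphere (0 : EuclideanSpace ℝ (Fin n)) 1 |
              ∑ j, |(x : EuclideanSpace ℝ (Fin n)) j| ≤ Real.sqrt n / 6} := by
        intro x hx
        exact hcon x hx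
      have hcontra := le_trans hM1 (le_trans (measure_mono hsubset) hbad)
      exact absurd hcontra (not_le.mpr ofReal_quarter_lt_half)
    obtain ⟨x, hxl, hxs⟩ := hex
    set c := ∑ j, |(x : EuclideanSpace ℝ (Fin n)) j| with hc
    have hc0 : 0 ≤ c := Finset.sum_nonneg fun j _ => abs_nonneg _
    have h1 : l (WithLp.toLp 2 (fun _ => c)) ≤ n * l ↑x := l_shift htri hhom habs hperm hn ↑x
    have h2 : l (WithLp.toLp 2 (fun _ => c)) = c * Real.sqrt n * l ξ := l_const hhom hn c hc0
    rw [h2] at h1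
    have h3 : (n:ℝ)/6 * l ξ ≤ c * Real.sqrt n * l ξ := by
      apply mul_le_mul_of_nonneg_right _ hξnn
      nlinarith [Real.mul_self_sqrt hnR.le]
    have h4 : (n:ℝ) * l ↑x ≤ n * M := mul_le_mul_of_nonneg_left hxl hnR.le
    have h6 : (n:ℝ)/6 * l ξ ≤ (n:ℝ) * M := le_trans h3 (le_trans h1 h4)
    nlinarith [h6, hnR]
  refine ⟨?_, by linarith [hupper] ⟩
  -- lower bound
  rcases le_or_gt M 0 with hM0 | hM0
  · have hnp : (1:ℝ)/100 * M / Real.sqrt (Real.log n) ≤ 0 := by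
      apply div_nonpos_of_nonpos_of_nonneg _ hslog.le
      nlinarith
    linarith [hξnn]
  have hA2 : uniformSphere n {x : sphere (0 : EuclideanSpace ℝ (Fin n)) 1 | M ≤ l ↑x} ≠ 0 := by
    intro h0
    rw [h0] at hM2
    simp at hM2
  by_cases hbig : 128 ≤ n
  · -- large n: concentration of the sup norm
    have h16n1 : (1:ℝ) < 16 * n := by nlinarith
    have hL : Real.log (16 * (n:ℝ)) = Real.log 16 + Real.log n :=
      Real.log_mul (by norm_num) (ne_of_gt hnR)
    have hlog16 : Real.log 16 ≤ 2.7725888 := by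
      have h2 : Real.log 2 < 0.6931471808 := Real.log_two_lt_d9
      have h16 : Real.log 16 = 4 * Real.log 2 := by
        rw [show (16:ℝ) = 2^4 by norm_num, Real.log_pow]
        push_cast; ring
      nlinarith
    have hlognle : Real.log n ≤ (n:ℝ)/16 + Real.log 16 - 1 := by
      have hpos : (0:ℝ) < (n:ℝ)/16 := by positivity
      have h1 := Real.log_le_sub_one_of_pos hpos
      have h2 : Real.log ((n:ℝ)/16) = Real.log n - Real.log 16 :=
        Real.log_div (ne_of_gt hnR) (by norm_num)
      linarith
    have hnbig : (128:ℝ) ≤ n := by exact_mod_cast hbig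
    have h8L : 8 * Real.log (16*(n:ℝ)) ≤ n := by
      rw [hL]; linarith
    have hLpos : 0 < Real.log (16*(n:ℝ)) := Real.log_pos h16n1
    set u : ℝ := 2 * Real.log (16*(n:ℝ)) / n with hu
    have hu0 : 0 < u := by rw [hu]; positivity
    have hu4 : u ≤ 1/4 := by rw [hu, div_le_iff₀ hnR]; linarith
    set t : ℝ := Real.sqrt u with ht
    have ht0 : 0 < t := Real.sqrt_pos.mpr hu0
    have ht2 : t^2 = u := Real.sq_sqrt hu0.le
    have ht12 : t ≤ 1/2 := by
      rw [ht, show (1/2:ℝ) = Real.sqrt (1/4) by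
        rw [show (1/4:ℝ) = (1/2)^2 by norm_num, Real.sqrt_sq (by norm_num)]]
      exact Real.sqrt_le_sqrt hu4
    have ht1 : t ≤ 1 := by linarith
    set s : ℝ := Real.sqrt (1 - t^2) with hs
    have hs0 : 0 ≤ s := Real.sqrt_nonneg _
    have hsle : s ≤ Real.exp (-(u/2)) := by
      rw [hs, ht2]
      have h1 : 1 - u ≤ Real.exp (-u) := by
        have := Real.add_one_le_exp (-u); linarith
      have h2 : Real.sqrt (Real.exp (-u)) = Real.exp (-(u/2)) := by
        rw [show Real.exp (-u) = Real.exp (-(u/2)) * Real.exp (-(u/2)) by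
          rw [← Real.exp_add]; ring_nf]
        exact Real.sqrt_mul_self (Real.exp_pos _).le
      calc Real.sqrt (1-u) ≤ Real.sqrt (Real.exp (-u)) := Real.sqrt_le_sqrt h1
        _ = Real.exp (-(u/2)) := h2
    have hsn' : s ^ n ≤ 1/(16*(n:ℝ)) := by
      have h1 : s ^ n ≤ Real.exp (-(u/2)) ^ n := pow_le_pow_left₀ hs0 hsle n
      have h2 : Real.exp (-(u/2)) ^ n = Real.exp ((n:ℝ) * (-(u/2))) := (Real.exp_nat_mul _ n).symm
      have h3 : (n:ℝ) * (-(u/2)) = - Real.log (16*(n:ℝ)) := by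
        rw [hu]; field_simp
      have h4 : Real.exp (- Real.log (16*(n:ℝ))) = 1/(16*(n:ℝ)) := by
        rw [Real.exp_neg, Real.exp_log (by positivity), one_div]
      calc s^n ≤ Real.exp (-(u/2)) ^ n := h1
        _ = Real.exp ((n:ℝ) * (-(u/2))) := h2
        _ = 1/(16*(n:ℝ)) := by rw [h3, h4]
    have htn : t ^ n ≤ (1/2) ^ n := pow_le_pow_left₀ ht0.le ht12 n
    have h2pow : 16*(n:ℝ) ≤ 2^n := by exact_mod_cast sixteen_le_two_pow n (by omega)
    have hreal : (n:ℝ) * (2 * (t^n + s^n)) ≤ 1/4 := by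
      have hp2 : (0:ℝ) < 2^n := by positivity
      have hbound1 : 2*(n:ℝ)*t^n ≤ 1/8 := by
        have hh : 2*(n:ℝ)*(1/2)^n ≤ 1/8 := by
          rw [div_pow, one_pow, mul_one_div, div_le_div_iff₀ hp2 (by norm_num)]
          linarith [h2pow]
        calc 2*(n:ℝ)*t^n ≤ 2*(n:ℝ)*(1/2)^n :=
              mul_le_mul_of_nonneg_left htn (by positivity)
          _ ≤ 1/8 := hh
      have hbound2 : 2*(n:ℝ)*s^n ≤ 1/8 := by
        calc 2*(n:ℝ)*s^n ≤ 2*(n:ℝ)*(1/(16*(n:ℝ))) :=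
              mul_le_mul_of_nonneg_left hsn' (by positivity)
          _ = 1/8 := by field_simp; ring
      linarith [hbound1, hbound2, (by ring : (n:ℝ) * (2 * (t^n + s^n)) = 2*(n:ℝ)*t^n + 2*(n:ℝ)*s^n)]
    have hbad : uniformSphere n {x : sphere (0 : EuclideanSpace ℝ (Fin n)) 1 |
        ¬ ∀ i, |(x : EuclideanSpace ℝ (Fin n)) i| ≤ t} ≤ ENNReal.ofReal (1/4) := by
      have hsub : {x : sphere (0 : EuclideanSpace ℝ (Fin n)) 1 |
            ¬ ∀ i, |(x : EuclideanSpace ℝ (Fin n)) i| ≤ t}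
          ⊆ ⋃ i : Fin n,
            ({x : sphere (0 : EuclideanSpace ℝ (Fin n)) 1 |
                t < inner (𝕜 := ℝ) (x : EuclideanSpace ℝ (Fin n)) (EuclideanSpace.single i 1)}
              ∪ {x : sphere (0 : EuclideanSpace ℝ (Fin n)) 1 |
                t < inner (𝕜 := ℝ) (x : EuclideanSpace ℝ (Fin n))
                  (-(EuclideanSpace.single i 1))}) := by
        intro x hx
        simp only [Set.mem_setOf_eq] at hx
        push_neg at hx
        obtain ⟨i, hi⟩ := hx
        refine Set.mem_iUnion.mpr ⟨i, ?_⟩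
        have hip : inner (𝕜 := ℝ) (x : EuclideanSpace ℝ (Fin n))
            (EuclideanSpace.single i (1:ℝ)) = (x : EuclideanSpace ℝ (Fin n)) i := by
          rw [EuclideanSpace.inner_single_right]; simp
        have him : inner (𝕜 := ℝ) (x : EuclideanSpace ℝ (Fin n))
            (-(EuclideanSpace.single i (1:ℝ))) = -((x : EuclideanSpace ℝ (Fin n)) i) := by
          rw [inner_neg_right, hip]
        rcases lt_abs.mp hi with h | h
        · left; simp only [Set.mem_setOf_eq, hip]; exact h
        · right; simp only [Set.mem_setOf_eq, him]; linarith
      have hcap : ∀ i : Fin n,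
          uniformSphere n
            ({x : sphere (0 : EuclideanSpace ℝ (Fin n)) 1 |
                t < inner (𝕜 := ℝ) (x : EuclideanSpace ℝ (Fin n)) (EuclideanSpace.single i 1)}
              ∪ {x : sphere (0 : EuclideanSpace ℝ (Fin n)) 1 |
                t < inner (𝕜 := ℝ) (x : EuclideanSpace ℝ (Fin n))
                  (-(EuclideanSpace.single i 1))})
            ≤ 2 * (ENNReal.ofReal (t^n) + ENNReal.ofReal (s^n)) := by
        intro i
        have hv1 : ‖(EuclideanSpace.single i (1:ℝ) : EuclideanSpace ℝ (Fin n))‖ = 1 := by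
          rw [EuclideanSpace.norm_single]; norm_num
        have hv2 : ‖(-(EuclideanSpace.single i (1:ℝ)) : EuclideanSpace ℝ (Fin n))‖ = 1 := by
          rw [norm_neg]; exact hv1
        have c1 := cap_le hn t ht0 ht1 (EuclideanSpace.single i 1) hv1
        have c2 := cap_le hn t ht0 ht1 (-(EuclideanSpace.single i 1)) hv2
        rw [← hs] at c1 c2
        calc uniformSphere n _ ≤ _ + _ := measure_union_le _ _
          _ ≤ (ENNReal.ofReal (t^n) + ENNReal.ofReal (s^n))
              + (ENNReal.ofReal (t^n) + ENNReal.ofReal (s^n)) := add_le_add c1 c2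
          _ = 2 * (ENNReal.ofReal (t^n) + ENNReal.ofReal (s^n)) := (two_mul _).symm
      calc uniformSphere n {x : sphere (0 : EuclideanSpace ℝ (Fin n)) 1 |
            ¬ ∀ i, |(x : EuclideanSpace ℝ (Fin n)) i| ≤ t}
          ≤ uniformSphere n (⋃ i : Fin n, _) := measure_mono hsub
        _ ≤ ∑ i : Fin n, uniformSphere n _ := measure_iUnion_fintype_le _ _
        _ ≤ ∑ _i : Fin n, 2 * (ENNReal.ofReal (t^n) + ENNReal.ofReal (s^n)) :=
            Finset.sum_le_sum fun i _ => hcap i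
        _ = (n : ℝ≥0∞) * (2 * (ENNReal.ofReal (t^n) + ENNReal.ofReal (s^n))) := by
            rw [Finset.sum_const, Finset.card_univ, Fintype.card_fin, nsmul_eq_mul]
        _ = ENNReal.ofReal ((n:ℝ) * (2 * (t^n + s^n))) := by
            rw [ENNReal.ofReal_mul hnR.le, ENNReal.ofReal_mul (by norm_num),
              ENNReal.ofReal_add (by positivity) (by positivity),
              ENNReal.ofReal_natCast, ENNReal.ofReal_ofNat]
        _ ≤ ENNReal.ofReal (1/4) := ENNReal.ofReal_le_ofReal hreal
    have hex : ∃ x : sphere (0 : EuclideanSpace ℝ (Fin n)) 1,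
        M ≤ l ↑x ∧ ∀ i, |(x : EuclideanSpace ℝ (Fin n)) i| ≤ t := by
      by_contra hcon
      push_neg at hcon
      have hsubset : {x : sphere (0 : EuclideanSpace ℝ (Fin n)) 1 | M ≤ l ↑x}
          ⊆ {x : sphere (0 : EuclideanSpace ℝ (Fin n)) 1 |
              ¬ ∀ i, |(x : EuclideanSpace ℝ (Fin n)) i| ≤ t} := by
        intro x hx
        simp only [Set.mem_setOf_eq]
        intro hall
        obtain ⟨i, hi⟩ := hcon x hx
        exact absurd (hall i) (not_le.mpr hi)
      have hcontra := le_trans hM2 (le_trans (measure_mono hsubset) hbad)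
      exact absurd hcontra (not_le.mpr ofReal_quarter_lt_half)
    obtain ⟨x, hxM, hxt⟩ := hex
    have hmono : l ↑x ≤ l (WithLp.toLp 2 (fun _ => t)) := by
      apply l_mono htri hhom habs (WithLp.toLp 2 (fun _ => t)) ↑x
      intro i
      calc |(x : EuclideanSpace ℝ (Fin n)) i| ≤ t := hxt i
        _ = |t| := (abs_of_pos ht0).symm
    have hconstt : l (WithLp.toLp 2 (fun _ => t)) = t * Real.sqrt n * l ξ := l_const hhom hn t ht0.le
    have htsn : t * Real.sqrt n ≤ 2 * Real.sqrt (Real.log n) := by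
      have h1 : t * Real.sqrt n = Real.sqrt (u * n) := by
        rw [ht, ← Real.sqrt_mul hu0.le]
      have h2 : u * n = 2 * Real.log (16*(n:ℝ)) := by
        rw [hu]; field_simp
      have h3 : Real.log (16*(n:ℝ)) ≤ 2 * Real.log n := by
        rw [hL]
        have h16n : Real.log 16 ≤ Real.log n := by
          apply Real.log_le_log (by norm_num)
          exact_mod_cast (by omega : 16 ≤ n)
        linarith
      have h4 : u * n ≤ 4 * Real.log n := by rw [h2]; linarith
      have h5 : 2 * Real.sqrt (Real.log n) = Real.sqrt (4 * Real.log n) := by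
        rw [Real.sqrt_mul (by norm_num), show Real.sqrt 4 = 2 by
          rw [show (4:ℝ) = 2^2 by norm_num, Real.sqrt_sq (by norm_num)]]
      rw [h1, h5]
      exact Real.sqrt_le_sqrt h4
    have hchain : M ≤ 2 * Real.sqrt (Real.log n) * l ξ := by
      calc M ≤ l ↑x := hxM
        _ ≤ t * Real.sqrt n * l ξ := hconstt ▸ hmono
        _ ≤ 2 * Real.sqrt (Real.log n) * l ξ := mul_le_mul_of_nonneg_right htsn hξnn
    rw [div_le_iff₀ hslog]
    have hprod : 0 ≤ l ξ * Real.sqrt (Real.log n) := mul_nonneg hξnn hslog.le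
    linarith [hchain, hprod]
  · -- small n
    obtain ⟨x₀, hx₀⟩ := MeasureTheory.nonempty_of_measure_ne_zero hA2
    have hx₀M : M ≤ l ↑x₀ := hx₀
    have hx₀s : ‖(x₀ : EuclideanSpace ℝ (Fin n))‖ = 1 := by
      have := x₀.2; rwa [mem_sphere_zero_iff_norm] at this
    have hmono : l ↑x₀ ≤ l (WithLp.toLp 2 (fun _ => (1:ℝ))) := by
      apply l_mono htri hhom habs (WithLp.toLp 2 (fun _ => (1:ℝ))) ↑x₀
      intro i
      calc |(x₀ : EuclideanSpace ℝ (Fin n)) i|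
          ≤ ‖(x₀ : EuclideanSpace ℝ (Fin n))‖ := coord_le_norm _ i
        _ = 1 := hx₀s
        _ = |(1:ℝ)| := by norm_num
    have hconst1 : l (WithLp.toLp 2 (fun _ => (1:ℝ))) = Real.sqrt n * l ξ := by
      have h := l_const hhom hn 1 zero_le_one
      rw [one_mul] at h
      exact h
    have hM : M ≤ Real.sqrt n * l ξ := le_trans hx₀M (hmono.trans_eq hconst1)
    have hsqrtn : Real.sqrt n ≤ 12 := by
      rw [show (12:ℝ) = Real.sqrt 144 by
        rw [show (144:ℝ) = 12^2 by norm_num, Real.sqrt_sq (by norm_num)]]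
      apply Real.sqrt_le_sqrt
      have : n ≤ 144 := by omega
      exact_mod_cast this
    have hlog2 : (0.69:ℝ) ≤ Real.sqrt (Real.log n) := by
      have h1 : Real.log 2 ≤ Real.log n := by
        apply Real.log_le_log (by norm_num)
        exact_mod_cast hn
      have hl2 : (0.6931471803:ℝ) < Real.log 2 := Real.log_two_gt_d9
      have h2 : Real.log 2 ≤ Real.sqrt (Real.log 2) := by
        have hx : (0:ℝ) ≤ Real.log 2 := Real.log_nonneg one_le_two
        have hs1 : Real.sqrt (Real.log 2) ≤ 1 := by
          rw [show (1:ℝ) = Real.sqrt 1 by rw [Real.sqrt_one]]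
          apply Real.sqrt_le_sqrt
          nlinarith [Real.log_two_lt_d9]
        nlinarith [Real.sq_sqrt hx, Real.sqrt_nonneg (Real.log 2)]
      calc (0.69:ℝ) ≤ Real.log 2 := by linarith
        _ ≤ Real.sqrt (Real.log 2) := h2
        _ ≤ Real.sqrt (Real.log n) := Real.sqrt_le_sqrt h1
    rw [div_le_iff₀ hslog]
    have h12 : M ≤ 12 * l ξ := by nlinarith [hM, hsqrtn, hξnn]
    have h69 : (0.69:ℝ) * l ξ ≤ Real.sqrt (Real.log n) * l ξ :=
      mul_le_mul_of_nonneg_right hlog2 hξnn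
    linarith [h12, h69, hξnn]
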